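/- arXiv:2207.00047 — 2 statements merged into one kernel-verified Lean document; each statement's English description precedes it below -/
import Mathlib

section
/- Let q be a prime power and k ≥ 2 an integer. For the polynomial ring F_q[T], define μ_k(f) = 1 if the monic polynomial f is not divisible by m^k for any monic irreducible m, and 0 otherwise, and Q_{k,0}(X) = Σ_{f monic, deg f < X} μ_k(f). Then for every positive integer X, Q_{k,0}(X) = (q^X − 1)/(q − 1) − [X > k] · q(q^{X−k} − 1)/(q − 1), where [X > k] is 1 if X > k and 0 otherwise. -/
open Polynomial UniqueFactorizationMonoid
set_option maxHeartbeats 1000000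

open Polynomial UniqueFactorizationMonoid

namespace Stmt0Aux

variable {F : Type} [Field F] [DecidableEq F]

lemma count_lt_of_kfree {k : ℕ} (hk : 0 < k) {f : F[X]} (hf : f ≠ 0)
    (h : ¬ ∃ m : F[X], m.Monic ∧ Irreducible m ∧ m ^ k ∣ f) (p : F[X]) :
    Multiset.count p (normalizedFactors f) < k := by
  classical
  by_contra hc
  push_neg at hc
  have hmem : p ∈ normalizedFactors f :=
    Multiset.count_pos.mp (lt_of_lt_of_le hk hc)
  have hp : Prime p := prime_of_normalized_factor p hmem
  have hnorm : normalize p = p := normalize_normalized_factor p hmem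
  have hmonic : p.Monic := by rw [← hnorm]; exact monic_normalize hp.ne_zero
  refine h ⟨p, hmonic, hp.irreducible, ?_⟩
  have hle : Multiset.replicate k p ≤ normalizedFactors f :=
    Multiset.le_count_iff_replicate_le.mp hc
  have h1 : p ^ k ∣ (normalizedFactors f).prod := by
    rw [← Multiset.prod_replicate]
    exact Multiset.prod_dvd_prod_of_le hle
  exact h1.trans (prod_normalizedFactors hf).dvd

lemma exists_decomp {k : ℕ} (hk : 0 < k) : ∀ (n : ℕ) (f : F[X]), f.natDegree = n → f.Monic →
    ∃ a b : F[X], a.Monic ∧ b.Monic ∧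
      (¬ ∃ m : F[X], m.Monic ∧ Irreducible m ∧ m ^ k ∣ a) ∧ f = a * b ^ k := by
  intro n
  induction n using Nat.strong_induction_on with
  | _ n ih =>
    intro f hfn hf
    by_cases h : ∃ m : F[X], m.Monic ∧ Irreducible m ∧ m ^ k ∣ f
    · obtain ⟨m, hm, him, g, hfg⟩ := h
      have hmk : (m ^ k).Monic := hm.pow k
      have hg : g.Monic := hmk.of_mul_monic_left (hfg ▸ hf)
      have hdm : 0 < m.natDegree := him.natDegree_pos
      have hdeg : f.natDegree = k * m.natDegree + g.natDegree := by
        rw [hfg, (hmk).natDegree_mul hg, hm.natDegree_pow]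
      have hlt : g.natDegree < n := by
        have : 0 < k * m.natDegree := Nat.mul_pos hk hdm
        omega
      obtain ⟨a, b, ha, hb, hka, hab⟩ := ih _ hlt g rfl hg
      exact ⟨a, m * b, ha, hm.mul hb, hka, by rw [hfg, hab, mul_pow]; ring⟩
    · exact ⟨f, 1, hf, monic_one, h, by simp⟩

lemma decomp_unique {k : ℕ} (hk : 0 < k) {a b a' b' : F[X]} (ha : a.Monic) (hb : b.Monic)
    (ha' : a'.Monic) (hb' : b'.Monic)
    (hfa : ¬ ∃ m : F[X], m.Monic ∧ Irreducible m ∧ m ^ k ∣ a)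
    (hfa' : ¬ ∃ m : F[X], m.Monic ∧ Irreducible m ∧ m ^ k ∣ a')
    (h : a * b ^ k = a' * b' ^ k) : a = a' ∧ b = b' := by
  classical
  have hcount : ∀ p : F[X],
      Multiset.count p (normalizedFactors a) + k * Multiset.count p (normalizedFactors b) =
      Multiset.count p (normalizedFactors a') + k * Multiset.count p (normalizedFactors b') := by
    intro p
    have h1 : normalizedFactors (a * b ^ k) = normalizedFactors a + k • normalizedFactors b := by
      rw [normalizedFactors_mul ha.ne_zero (pow_ne_zero _ hb.ne_zero), normalizedFactors_pow]
    have h2 : normalizedFactors (a' * b' ^ k) = normalizedFactors a' + k • normalizedFactors b' := by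
      rw [normalizedFactors_mul ha'.ne_zero (pow_ne_zero _ hb'.ne_zero), normalizedFactors_pow]
    have h3 : normalizedFactors a + k • normalizedFactors b =
        normalizedFactors a' + k • normalizedFactors b' := by rw [← h1, ← h2, h]
    simpa [Multiset.count_nsmul] using congrArg (Multiset.count p) h3
  have key : ∀ p : F[X],
      Multiset.count p (normalizedFactors a) = Multiset.count p (normalizedFactors a') ∧
      Multiset.count p (normalizedFactors b) = Multiset.count p (normalizedFactors b') := by
    intro p
    have hra := count_lt_of_kfree hk ha.ne_zero hfa p
    have hra' := count_lt_of_kfree hk ha'.ne_zero hfa' p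
    have heq := hcount p
    set r := Multiset.count p (normalizedFactors a)
    set s := Multiset.count p (normalizedFactors b)
    set r' := Multiset.count p (normalizedFactors a')
    set s' := Multiset.count p (normalizedFactors b')
    have hr : r = r' := by
      have h1 : (r + k * s) % k = r % k := by simp [Nat.add_mul_mod_self_left]
      have h2 : (r' + k * s') % k = r' % k := by simp [Nat.add_mul_mod_self_left]
      rw [heq, h2] at h1
      rw [Nat.mod_eq_of_lt hra', Nat.mod_eq_of_lt hra] at h1
      exact h1.symm
    refine ⟨hr, ?_⟩
    rw [hr] at heq
    exact Nat.eq_of_mul_eq_mul_left hk (Nat.add_left_cancel heq)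
  have hNFa : normalizedFactors a = normalizedFactors a' :=
    Multiset.ext.mpr fun p => (key p).1
  have hNFb : normalizedFactors b = normalizedFactors b' :=
    Multiset.ext.mpr fun p => (key p).2
  constructor
  · have := (associated_iff_normalizedFactors_eq_normalizedFactors ha.ne_zero ha'.ne_zero).mpr hNFa
    rw [← ha.normalize_eq_self, ← ha'.normalize_eq_self]
    exact normalize_eq_normalize this.dvd this.symm.dvd
  · have := (associated_iff_normalizedFactors_eq_normalizedFactors hb.ne_zero hb'.ne_zero).mpr hNFb
    rw [← hb.normalize_eq_self, ← hb'.normalize_eq_self]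
    exact normalize_eq_normalize this.dvd this.symm.dvd




lemma finite_aux [Fintype F] (X : ℕ) (P : F[X] → Prop) (hP : ∀ f, P f → f.natDegree < X) :
    Finite {f : F[X] // P f} := by
  classical
  have hinj : Function.Injective
      (fun f : {f : F[X] // P f} => fun i : Fin X => f.1.coeff i) := by
    intro f g h
    ext n
    by_cases hn : n < X
    · exact congrFun h ⟨n, hn⟩
    · rw [coeff_eq_zero_of_natDegree_lt (lt_of_lt_of_le (hP _ f.2) (le_of_not_gt hn)),
        coeff_eq_zero_of_natDegree_lt (lt_of_lt_of_le (hP _ g.2) (le_of_not_gt hn))]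
  exact Finite.of_injective _ hinj

/-- monic of `natDegree = n` are a `degreeLT`-torsor. -/
noncomputable def monEqEquiv (n : ℕ) :
    {f : F[X] // f.Monic ∧ f.natDegree = n} ≃ degreeLT F n where
  toFun f := ⟨f.1 - X ^ n, by
    rw [mem_degreeLT]
    have h1 : f.1.degree = (n : WithBot ℕ) := by
      rw [degree_eq_natDegree f.2.1.ne_zero, f.2.2]
    have hd : f.1.degree = (X ^ n : F[X]).degree := by rw [h1, degree_X_pow]
    have := degree_sub_lt hd f.2.1.ne_zero
      (by rw [f.2.1.leadingCoeff, leadingCoeff_X_pow])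
    rwa [h1] at this⟩
  invFun g := ⟨X ^ n + g.1, by
    have hg : g.1.degree < (X ^ n : F[X]).degree := by
      rw [degree_X_pow]; exact mem_degreeLT.mp g.2
    refine ⟨(monic_X_pow n).add_of_left hg, ?_⟩
    have := degree_add_eq_left_of_degree_lt hg
    rw [degree_X_pow] at this
    exact natDegree_eq_of_degree_eq_some this⟩
  left_inv f := by ext1; simp
  right_inv g := by ext1; simp

/-- monic polys of degree `< X`, fibered by degree. -/
def monSEquiv (X : ℕ) : {f : F[X] // f.Monic ∧ f.natDegree < X} ≃
    Σ n : Fin X, {f : F[X] // f.Monic ∧ f.natDegree = n} where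
  toFun f := ⟨⟨f.1.natDegree, f.2.2⟩, ⟨f.1, f.2.1, rfl⟩⟩
  invFun g := ⟨g.2.1, g.2.2.1, by rw [g.2.2.2]; exact g.1.2⟩
  left_inv f := rfl
  right_inv g := by
    obtain ⟨⟨n, hn⟩, f, hf, h⟩ := g
    simp only [Fin.val_mk] at h
    subst h
    rfl

lemma card_monS [Fintype F] (X : ℕ) :
    Nat.card {f : F[X] // f.Monic ∧ f.natDegree < X} =
      ∑ n ∈ Finset.range X, Fintype.card F ^ n := by
  classical
  rw [Nat.card_congr (monSEquiv X)]
  have hcard : ∀ n : ℕ, Nat.card {f : F[X] // f.Monic ∧ f.natDegree = n} = Fintype.card F ^ n := by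
    intro n
    rw [Nat.card_congr (monEqEquiv n), Nat.card_congr (degreeLTEquiv F n).toEquiv]
    simp [Nat.card_eq_fintype_card]
  haveI : ∀ n : ℕ, Fintype {f : F[X] // f.Monic ∧ f.natDegree = n} := fun n =>
    @Fintype.ofFinite _ (finite_aux (n + 1) _ (fun f hf => by omega))
  rw [Nat.card_eq_fintype_card, Fintype.card_sigma]
  have h2 : ∀ i : Fin X, Fintype.card {f : F[X] // f.Monic ∧ f.natDegree = (i : ℕ)} =
      Fintype.card F ^ (i : ℕ) := fun i => by rw [← Nat.card_eq_fintype_card]; exact hcard i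
  rw [Finset.sum_congr rfl (fun i _ => h2 i), Fin.sum_univ_eq_sum_range]




noncomputable def pairEquiv (k : ℕ) (hk : 0 < k) (X : ℕ) :
    {ab : F[X] × F[X] // ab.1.Monic ∧ ab.2.Monic ∧
      (¬ ∃ m : F[X], m.Monic ∧ Irreducible m ∧ m ^ k ∣ ab.1) ∧
      ab.1.natDegree + k * ab.2.natDegree < X} ≃
    {f : F[X] // f.Monic ∧ f.natDegree < X} := by
  refine Equiv.ofBijective (fun p => ⟨p.1.1 * p.1.2 ^ k, p.2.1.mul (p.2.2.1.pow k), ?_⟩)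
    ⟨?_, ?_⟩
  · rw [p.2.1.natDegree_mul (p.2.2.1.pow k), p.2.2.1.natDegree_pow]
    exact p.2.2.2.2
  · rintro ⟨⟨a, b⟩, ha, hb, hka, hd⟩ ⟨⟨a', b'⟩, ha', hb', hka', hd'⟩ h
    simp only [Subtype.mk.injEq] at h
    obtain ⟨h1, h2⟩ := decomp_unique hk ha hb ha' hb' hka hka' h
    exact Subtype.ext (Prod.ext h1 h2)
  · rintro ⟨f, hf, hd⟩
    obtain ⟨a, b, ha, hb, hka, hab⟩ := exists_decomp hk f.natDegree f rfl hf
    have hdeg : a.natDegree + k * b.natDegree < X := by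
      have : f.natDegree = a.natDegree + k * b.natDegree := by
        rw [hab, ha.natDegree_mul (hb.pow k), hb.natDegree_pow]
      omega
    exact ⟨⟨(a, b), ha, hb, hka, hdeg⟩, by simp [← hab]⟩

lemma monic_divX {b : F[X]} (hb : b.Monic) (h1 : b ≠ 1) : b.divX.Monic := by
  have hd : 1 ≤ b.natDegree :=
    Nat.pos_of_ne_zero (fun h => h1 ((hb.natDegree_eq_zero).mp h))
  unfold Monic
  rw [leadingCoeff, natDegree_divX_eq_natDegree_tsub_one, coeff_divX,
    Nat.sub_add_cancel hd]
  exact hb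

lemma monic_aux {b' : F[X]} (hb' : b'.Monic) (c : F) :
    (b' * X + C c).Monic ∧ (b' * X + C c).natDegree = b'.natDegree + 1 ∧
      (b' * X + C c).divX = b' ∧ (b' * X + C c).coeff 0 = c := by
  have hbx : (b' * X).Monic := hb'.mul monic_X
  have hdeg : (b' * X).degree = ((b'.natDegree + 1 : ℕ) : WithBot ℕ) := by
    rw [degree_eq_natDegree hbx.ne_zero, natDegree_mul_X hb'.ne_zero]
  have hclt : (C c).degree < (b' * X).degree := by
    refine lt_of_le_of_lt degree_C_le ?_
    rw [hdeg]
    exact_mod_cast Nat.succ_pos _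
  refine ⟨hbx.add_of_left hclt, ?_, ?_, ?_⟩
  · have := degree_add_eq_left_of_degree_lt hclt
    rw [hdeg] at this
    exact natDegree_eq_of_degree_eq_some this
  · rw [divX_add, divX_C, add_zero]
    ext n
    rw [coeff_divX, coeff_mul_X]
  · simp

noncomputable def splitEquiv (k X : ℕ) (hk : 0 < k) (hkX : k ≤ X) :
    {ab : F[X] × F[X] // ab.1.Monic ∧ ab.2.Monic ∧
      (¬ ∃ m : F[X], m.Monic ∧ Irreducible m ∧ m ^ k ∣ ab.1) ∧
      ab.1.natDegree + k * ab.2.natDegree < X} ≃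
    ({f : F[X] // f.Monic ∧ f.natDegree < X ∧
      ¬ ∃ m : F[X], m.Monic ∧ Irreducible m ∧ m ^ k ∣ f} ⊕
    (F × {ab : F[X] × F[X] // ab.1.Monic ∧ ab.2.Monic ∧
      (¬ ∃ m : F[X], m.Monic ∧ Irreducible m ∧ m ^ k ∣ ab.1) ∧
      ab.1.natDegree + k * ab.2.natDegree < X - k})) := by
  classical
  refine (Equiv.sumCompl (fun p : {ab : F[X] × F[X] // ab.1.Monic ∧ ab.2.Monic ∧
      (¬ ∃ m : F[X], m.Monic ∧ Irreducible m ∧ m ^ k ∣ ab.1) ∧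
      ab.1.natDegree + k * ab.2.natDegree < X} => p.1.2 = 1)).symm.trans
    (Equiv.sumCongr ?_ ?_)
  · exact
    { toFun := fun p => ⟨p.1.1.1, p.1.2.1, by
        have h := p.1.2.2.2.2
        rw [p.2] at h
        simpa using h, p.1.2.2.2.1⟩
      invFun := fun f => ⟨⟨(f.1, 1), f.2.1, monic_one, f.2.2.2, by simpa using f.2.2.1⟩, rfl⟩
      left_inv := fun p => Subtype.ext (Subtype.ext (Prod.ext rfl p.2.symm))
      right_inv := fun f => rfl }
  · exact
    { toFun := fun p => (p.1.1.2.coeff 0, ⟨(p.1.1.1, p.1.1.2.divX),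
        p.1.2.1, monic_divX p.1.2.2.1 p.2, p.1.2.2.2.1, by
          show p.1.1.1.natDegree + k * p.1.1.2.divX.natDegree < X - k
          have hd1 : 1 ≤ p.1.1.2.natDegree := Nat.pos_of_ne_zero
            (fun h => p.2 ((p.1.2.2.1.natDegree_eq_zero).mp h))
          have h := p.1.2.2.2.2
          obtain ⟨e, he⟩ : ∃ e, p.1.1.2.natDegree = e + 1 := ⟨p.1.1.2.natDegree - 1, by omega⟩
          rw [natDegree_divX_eq_natDegree_tsub_one, he, Nat.add_sub_cancel]
          rw [he, Nat.mul_succ] at h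
          exact Nat.lt_sub_of_add_lt (by rw [add_assoc]; exact h)⟩)
      invFun := fun q => ⟨⟨(q.2.1.1, q.2.1.2 * Polynomial.X + C q.1), q.2.2.1,
          (monic_aux q.2.2.2.1 q.1).1, q.2.2.2.2.1, by
            show q.2.1.1.natDegree +
              k * (q.2.1.2 * Polynomial.X + C q.1).natDegree < X
            have h2 := (monic_aux q.2.2.2.1 q.1).2.1
            have h := q.2.2.2.2.2
            rw [h2, Nat.mul_succ, ← add_assoc]
            have h3 : q.2.1.1.natDegree + k * q.2.1.2.natDegree + k < (X - k) + k :=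
              Nat.add_lt_add_right h k
            rwa [Nat.sub_add_cancel hkX] at h3⟩, by
          intro hcon
          have hcon' : q.2.1.2 * Polynomial.X + C q.1 = 1 := hcon
          have h2 := (monic_aux q.2.2.2.1 q.1).2.1
          rw [hcon', natDegree_one] at h2
          exact Nat.succ_ne_zero _ h2.symm⟩
      left_inv := fun p => Subtype.ext (Subtype.ext (Prod.ext rfl (divX_mul_X_add _)))
      right_inv := fun q => Prod.ext ((monic_aux q.2.2.2.1 q.1).2.2.2)
        (Subtype.ext (Prod.ext rfl ((monic_aux q.2.2.2.1 q.1).2.2.1))) }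


lemma finite_aux2 [Fintype F] (X : ℕ) (P : F[X] × F[X] → Prop)
    (hP : ∀ ab, P ab → ab.1.natDegree < X ∧ ab.2.natDegree < X) : Finite {ab // P ab} := by
  haveI : Finite {g : F[X] // g.natDegree < X} := finite_aux X _ (fun _ h => h)
  have hinj : Function.Injective (fun f : {ab // P ab} =>
      (((⟨f.1.1, (hP _ f.2).1⟩ : {g : F[X] // g.natDegree < X}),
        (⟨f.1.2, (hP _ f.2).2⟩ : {g : F[X] // g.natDegree < X})))) := by
    rintro ⟨⟨a, b⟩, hab⟩ ⟨⟨a', b'⟩, hab'⟩ h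
    simp only [Prod.mk.injEq, Subtype.mk.injEq] at h
    exact Subtype.ext (Prod.ext h.1 h.2)
  exact Finite.of_injective _ hinj

end Stmt0Aux

open Stmt0Aux

/-- The number of `k`-free monic polynomials of degree `< X` over `𝔽_q`. -/
theorem stmt0 (q k : ℕ) (hq : ∃ p n : ℕ, p.Prime ∧ 0 < n ∧ q = p ^ n) (hk : 2 ≤ k)
    (F : Type) [Field F] [Fintype F] (hF : Fintype.card F = q)
    (X : ℕ) (hX : 0 < X) :
    (Nat.card {f : F[X] // f.Monic ∧ f.natDegree < X ∧
        ¬ ∃ m : F[X], m.Monic ∧ Irreducible m ∧ m ^ k ∣ f} : ℚ) =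
      ((q : ℚ) ^ X - 1) / ((q : ℚ) - 1) -
        (if k < X then (q : ℚ) * ((q : ℚ) ^ (X - k) - 1) / ((q : ℚ) - 1) else 0) := by
  classical
  have hq2 : 2 ≤ q := by
    obtain ⟨p, n, hp, hn, rfl⟩ := hq
    calc 2 ≤ p := hp.two_le
    _ ≤ p ^ n := Nat.le_self_pow hn.ne' p
  have hk0 : 0 < k := by omega
  have hq1 : (q : ℚ) ≠ 1 := by
    intro h
    have : q = 1 := by exact_mod_cast h
    omega
  have hT : ∀ Y : ℕ, (Nat.card {f : F[X] // f.Monic ∧ f.natDegree < Y} : ℚ)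
      = ((q : ℚ) ^ Y - 1) / ((q : ℚ) - 1) := by
    intro Y
    rw [card_monS Y, hF]
    push_cast
    rw [geom_sum_eq hq1 Y]
  by_cases hkX : k < X
  · rw [if_pos hkX]
    haveI hfin1 : Finite {f : F[X] // f.Monic ∧ f.natDegree < X ∧
        ¬ ∃ m : F[X], m.Monic ∧ Irreducible m ∧ m ^ k ∣ f} :=
      finite_aux X _ (fun f hf => hf.2.1)
    haveI hfin2 : Finite {ab : F[X] × F[X] // ab.1.Monic ∧ ab.2.Monic ∧
        (¬ ∃ m : F[X], m.Monic ∧ Irreducible m ∧ m ^ k ∣ ab.1) ∧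
        ab.1.natDegree + k * ab.2.natDegree < X - k} := by
      refine finite_aux2 (X - k) _ (fun ab hab => ⟨by omega, ?_⟩)
      have h1 : ab.2.natDegree ≤ k * ab.2.natDegree := Nat.le_mul_of_pos_left _ hk0
      omega
    have key : Nat.card {f : F[X] // f.Monic ∧ f.natDegree < X} =
        Nat.card {f : F[X] // f.Monic ∧ f.natDegree < X ∧
          ¬ ∃ m : F[X], m.Monic ∧ Irreducible m ∧ m ^ k ∣ f} +
        q * Nat.card {f : F[X] // f.Monic ∧ f.natDegree < X - k} := by
      rw [Nat.card_congr ((pairEquiv k hk0 X).symm.trans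
        (splitEquiv k X hk0 (le_of_lt hkX))), Nat.card_sum, Nat.card_prod,
        Nat.card_congr (pairEquiv k hk0 (X - k)), Nat.card_eq_fintype_card (α := F), hF]
    have keyQ : (Nat.card {f : F[X] // f.Monic ∧ f.natDegree < X} : ℚ) =
        (Nat.card {f : F[X] // f.Monic ∧ f.natDegree < X ∧
          ¬ ∃ m : F[X], m.Monic ∧ Irreducible m ∧ m ^ k ∣ f} : ℚ) +
        (q : ℚ) * (Nat.card {f : F[X] // f.Monic ∧ f.natDegree < X - k} : ℚ) := by
      exact_mod_cast congrArg (Nat.cast (R := ℚ)) key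
    rw [hT X, hT (X - k)] at keyQ
    rw [mul_div_assoc]
    linarith [keyQ]
  · rw [if_neg hkX, sub_zero]
    have hiff : ∀ f : F[X], (f.Monic ∧ f.natDegree < X ∧
        ¬ ∃ m : F[X], m.Monic ∧ Irreducible m ∧ m ^ k ∣ f) ↔
        (f.Monic ∧ f.natDegree < X) := by
      intro f
      constructor
      · rintro ⟨h1, h2, _⟩; exact ⟨h1, h2⟩
      · rintro ⟨h1, h2⟩
        refine ⟨h1, h2, ?_⟩
        rintro ⟨m, hm, him, hdvd⟩
        have h3 : (m ^ k).natDegree ≤ f.natDegree := natDegree_le_of_dvd hdvd h1.ne_zero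
        rw [hm.natDegree_pow] at h3
        have h4 : 1 ≤ m.natDegree := him.natDegree_pos
        have h5 : k ≤ k * m.natDegree := Nat.le_mul_of_pos_right k h4
        omega
    rw [Nat.card_congr (Equiv.subtypeEquivRight hiff), hT X]
end

section
/- For the polynomial ring F_q[T], define Φ(f) = |f| · Π_{m | f, m monic irreducible} (1 − 1/|m|) for monic f, where |f| = q^{deg f}, and F_{Φ,0}(X) = Σ_{f monic, deg f < X} Φ(f). Then for every positive integer X, F_{Φ,0}(X) = (q^{2X−1} + 1)/(q + 1). -/
open Polynomial UniqueFactorizationMonoid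

/-- The function-field Euler totient of a monic polynomial `f` over `𝔽_q`:
`Φ(f) = q^(deg f) · ∏_{m | f, m monic irreducible} (1 - 1/q^(deg m))`. -/
noncomputable def totientFF (q : ℕ) {F : Type} [Field F] [Fintype F] [DecidableEq F]
    (f : F[X]) : ℚ :=
  (q : ℚ) ^ f.natDegree *
    ∏ m ∈ (normalizedFactors f).toFinset, (1 - 1 / (q : ℚ) ^ m.natDegree)

section AuxFF

open Finset
open scoped Classical

variable {F : Type} [Field F] [Fintype F] [DecidableEq F]

/-- The finset of monic polynomials of `natDegree` exactly `n`. -/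
noncomputable def monicsFF (F : Type) [Field F] [Fintype F] [DecidableEq F] (n : ℕ) :
    Finset F[X] :=
  (Finset.univ : Finset (Fin n → F)).image fun v => X ^ n + ∑ i : Fin n, C (v i) * X ^ (i : ℕ)


lemma coeffFF {n : ℕ} (v : Fin n → F) {j : ℕ} (hj : j < n) :
    (X ^ n + ∑ i : Fin n, C (v i) * X ^ (i : ℕ)).coeff j = v ⟨j, hj⟩ := by
  rw [coeff_add, coeff_X_pow, if_neg hj.ne, finset_sum_coeff]
  simp only [coeff_C_mul, coeff_X_pow]
  rw [Finset.sum_eq_single (⟨j, hj⟩ : Fin n)]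
  · simp
  · intro b _ hb
    rw [if_neg, mul_zero]
    exact fun h => hb (Fin.ext h.symm)
  · simp

lemma degFF {n : ℕ} (v : Fin n → F) :
    (∑ i : Fin n, C (v i) * X ^ (i : ℕ)).degree < ((X : F[X]) ^ n).degree := by
  rw [degree_X_pow]
  apply lt_of_le_of_lt (degree_sum_le _ _)
  rw [Finset.sup_lt_iff (by exact_mod_cast WithBot.bot_lt_coe n)]
  intro i _
  exact lt_of_le_of_lt (degree_C_mul_X_pow_le _ _) (by exact_mod_cast i.2)

lemma mem_monicsFF {n : ℕ} {f : F[X]} :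
    f ∈ monicsFF F n ↔ f.Monic ∧ f.natDegree = n := by
  rw [monicsFF]
  simp only [Finset.mem_image, Finset.mem_univ, true_and]
  constructor
  · rintro ⟨v, rfl⟩
    have hd := degFF v
    constructor
    · rw [degree_X_pow] at hd
      exact monic_X_pow_add hd
    · rw [natDegree_add_eq_left_of_degree_lt hd, natDegree_X_pow]
  · rintro ⟨hm, rfl⟩
    refine ⟨fun i => f.coeff i, ?_⟩
    conv_rhs => rw [hm.as_sum]
    congr 1
    exact (Finset.sum_range fun i => C (f.coeff i) * X ^ i).symm

lemma card_monicsFF (n : ℕ) : (monicsFF F n).card = Fintype.card F ^ n := by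
  rw [monicsFF, Finset.card_image_of_injective _ ?_, Finset.card_univ, Fintype.card_fun,
    Fintype.card_fin]
  intro v w h
  funext i
  have := congrArg (fun p => Polynomial.coeff p (i : ℕ)) h
  simpa [coeffFF v i.2, coeffFF w i.2] using this

lemma card_monicsFF_dvd {d : F[X]} (hd : d.Monic) {n : ℕ} (hdn : d.natDegree ≤ n) :
    ((monicsFF F n).filter (d ∣ ·)).card = Fintype.card F ^ (n - d.natDegree) := by
  rw [← card_monicsFF (F := F) (n - d.natDegree)]
  apply (Finset.card_bij (fun g _ => d * g) ?_ ?_ ?_).symm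
  · intro g hg
    obtain ⟨hgm, hgd⟩ := mem_monicsFF.mp hg
    rw [Finset.mem_filter]
    refine ⟨mem_monicsFF.mpr ⟨hd.mul hgm, ?_⟩, dvd_mul_right _ _⟩
    rw [natDegree_mul hd.ne_zero hgm.ne_zero, hgd]
    omega
  · intro g₁ _ g₂ _ h
    exact mul_left_cancel₀ hd.ne_zero h
  · intro f hf
    obtain ⟨hfm, hdvd⟩ := Finset.mem_filter.mp hf
    obtain ⟨hfmon, hfdeg⟩ := mem_monicsFF.mp hfm
    obtain ⟨g, rfl⟩ := hdvd
    have hg0 : g ≠ 0 := by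
      rintro rfl
      rw [mul_zero] at hfmon
      exact (not_monic_zero (R := F)) hfmon
    have hglc : g.Monic := by
      have := hfmon.leadingCoeff
      rw [leadingCoeff_mul, hd.leadingCoeff, one_mul] at this
      exact this
    refine ⟨g, mem_monicsFF.mpr ⟨hglc, ?_⟩, rfl⟩
    rw [natDegree_mul hd.ne_zero hg0] at hfdeg
    omega

/-- The sum of `natDegree` over a finset of polynomials. -/
noncomputable def degsumFF (t : Finset F[X]) : ℕ := ∑ m ∈ t, m.natDegree

/-- Monic irreducible polynomials of degree at most `n`. -/
noncomputable def irrsFF (F : Type) [Field F] [Fintype F] [DecidableEq F] (n : ℕ) :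
    Finset F[X] :=
  ((Finset.range (n + 1)).biUnion (monicsFF F)).filter fun m => Irreducible m

lemma mem_irrsFF {n : ℕ} {m : F[X]} :
    m ∈ irrsFF F n ↔ Irreducible m ∧ m.Monic ∧ m.natDegree ≤ n := by
  rw [irrsFF, Finset.mem_filter, Finset.mem_biUnion]
  simp only [Finset.mem_range, mem_monicsFF]
  constructor
  · rintro ⟨⟨k, hk, hm, hdeg⟩, hirr⟩
    exact ⟨hirr, hm, by omega⟩
  · rintro ⟨hirr, hm, hdeg⟩
    exact ⟨⟨m.natDegree, by omega, hm, rfl⟩, hirr⟩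

/-- Möbius-type coefficients. -/
noncomputable def bFF (F : Type) [Field F] [Fintype F] [DecidableEq F] (k : ℕ) : ℚ :=
  ∑ t ∈ (irrsFF F k).powerset.filter (fun t => degsumFF t = k), (-1 : ℚ) ^ t.card

lemma nf_subset_irrsFF {f : F[X]} (hf : f.Monic) {n : ℕ} (hfn : f.natDegree = n) :
    (normalizedFactors f).toFinset ⊆ irrsFF F n := by
  intro m hm
  rw [Multiset.mem_toFinset] at hm
  have hm0 : m ≠ 0 := (prime_of_normalized_factor m hm).ne_zero
  have hmon : m.Monic := by
    have := monic_normalize (p := m) hm0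
    rwa [normalize_normalized_factor m hm] at this
  refine mem_irrsFF.mpr ⟨irreducible_of_normalized_factor m hm, hmon, ?_⟩
  rw [← hfn]
  exact natDegree_le_of_dvd (dvd_of_mem_normalizedFactors hm) hf.ne_zero

lemma subset_nf_iff_prod_dvd {f : F[X]} (hf : f.Monic) {t : Finset F[X]}
    (ht : ∀ m ∈ t, Irreducible m ∧ m.Monic) :
    t ⊆ (normalizedFactors f).toFinset ↔ (∏ m ∈ t, m) ∣ f := by
  constructor
  · intro h
    have hle : t.val ≤ normalizedFactors f := by
      rw [Multiset.le_iff_count]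
      intro m
      by_cases hm : m ∈ t
      · have h1 : t.val.count m = 1 := Multiset.count_eq_one_of_mem t.nodup hm
        have h2 : 1 ≤ (normalizedFactors f).count m :=
          Multiset.one_le_count_iff_mem.mpr (Multiset.mem_toFinset.mp (h hm))
        omega
      · rw [Multiset.count_eq_zero_of_notMem hm]
        omega
    rw [show (∏ m ∈ t, m) = t.val.prod from (Finset.prod_val t).symm]
    exact (Multiset.prod_dvd_prod_of_le hle).trans (prod_normalizedFactors hf.ne_zero).dvd
  · intro hdvd m hm
    have hmf : m ∣ f := (Finset.dvd_prod_of_mem _ hm).trans hdvd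
    obtain ⟨r, hr, hassoc⟩ :=
      exists_mem_normalizedFactors_of_dvd hf.ne_zero (ht m hm).1 hmf
    have heq : m = r := by
      have h1 := normalize_normalized_factor r hr
      have h2 := (ht m hm).2.normalize_eq_self
      rw [← h2, ← h1]
      exact normalize_eq_normalize hassoc.dvd hassoc.symm.dvd
    exact Multiset.mem_toFinset.mpr (heq ▸ hr)

lemma swapFF (n : ℕ) (G : ℕ → ℕ → ℚ) :
    ∑ f ∈ monicsFF F n, ∑ t ∈ ((normalizedFactors f).toFinset).powerset,
        G t.card (degsumFF t)
      = ∑ t ∈ (irrsFF F n).powerset, G t.card (degsumFF t) *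
          (if degsumFF t ≤ n then ((Fintype.card F : ℚ)) ^ (n - degsumFF t) else 0) := by
  have h1 : ∀ f ∈ monicsFF F n,
      ∑ t ∈ ((normalizedFactors f).toFinset).powerset, G t.card (degsumFF t)
        = ∑ t ∈ (irrsFF F n).powerset,
            (if t ⊆ (normalizedFactors f).toFinset then G t.card (degsumFF t) else 0) := by
    intro f hf
    obtain ⟨hfm, hfd⟩ := mem_monicsFF.mp hf
    rw [Finset.sum_congr rfl (g := fun t =>
        if t ⊆ (normalizedFactors f).toFinset then G t.card (degsumFF t) else 0)
      (fun t ht => (if_pos (Finset.mem_powerset.mp ht)).symm)]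
    apply Finset.sum_subset (Finset.powerset_mono.mpr (nf_subset_irrsFF hfm hfd))
    intro t _ ht
    rw [if_neg (fun hc => ht (Finset.mem_powerset.mpr hc))]
  rw [Finset.sum_congr rfl h1, Finset.sum_comm]
  apply Finset.sum_congr rfl
  intro t ht
  have htsub := Finset.mem_powerset.mp ht
  have htim : ∀ m ∈ t, Irreducible m ∧ m.Monic :=
    fun m hm => ⟨(mem_irrsFF.mp (htsub hm)).1, (mem_irrsFF.mp (htsub hm)).2.1⟩
  have hne : ∀ m ∈ t, m ≠ 0 := fun m hm => (htim m hm).1.ne_zero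
  have hpm : (∏ m ∈ t, m).Monic := monic_prod_of_monic _ _ (fun m hm => (htim m hm).2)
  have hpd : (∏ m ∈ t, m).natDegree = degsumFF t := natDegree_prod _ _ hne
  have h2 : ∀ f ∈ monicsFF F n,
      (if t ⊆ (normalizedFactors f).toFinset then G t.card (degsumFF t) else 0)
        = (if (∏ m ∈ t, m) ∣ f then G t.card (degsumFF t) else 0) := by
    intro f hf
    simp only [subset_nf_iff_prod_dvd (mem_monicsFF.mp hf).1 htim]
  rw [Finset.sum_congr rfl h2, ← Finset.sum_filter, Finset.sum_const, nsmul_eq_mul, mul_comm]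
  congr 1
  by_cases hdeg : degsumFF t ≤ n
  · rw [if_pos hdeg]
    have := card_monicsFF_dvd (F := F) hpm (n := n) (by omega)
    rw [hpd] at this
    rw [this]
    push_cast
    rfl
  · rw [if_neg hdeg]
    have : (monicsFF F n).filter ((∏ m ∈ t, m) ∣ ·) = ∅ := by
      rw [Finset.filter_eq_empty_iff]
      intro f hf hdvd
      obtain ⟨hfm, hfd⟩ := mem_monicsFF.mp hf
      have := natDegree_le_of_dvd hdvd hfm.ne_zero
      rw [hpd, hfd] at this
      omega
    rw [this, Finset.card_empty, Nat.cast_zero]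

lemma bFF_stab {k n : ℕ} (hkn : k ≤ n) :
    ∑ t ∈ (irrsFF F n).powerset.filter (fun t => degsumFF t = k), (-1 : ℚ) ^ t.card
      = bFF F k := by
  rw [bFF]
  congr 1
  ext t
  simp only [Finset.mem_filter, Finset.mem_powerset]
  constructor
  · rintro ⟨hsub, hdeg⟩
    refine ⟨fun m hm => ?_, hdeg⟩
    obtain ⟨h1, h2, _⟩ := mem_irrsFF.mp (hsub hm)
    refine mem_irrsFF.mpr ⟨h1, h2, ?_⟩
    rw [← hdeg]
    exact Finset.single_le_sum (f := fun m => m.natDegree) (fun i _ => Nat.zero_le _) hm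
  · rintro ⟨hsub, hdeg⟩
    refine ⟨fun m hm => ?_, hdeg⟩
    obtain ⟨h1, h2, h3⟩ := mem_irrsFF.mp (hsub hm)
    exact mem_irrsFF.mpr ⟨h1, h2, h3.trans hkn⟩

lemma groupFF (n : ℕ) (w : ℕ → ℚ) :
    ∑ t ∈ (irrsFF F n).powerset,
        (-1 : ℚ) ^ t.card * (if degsumFF t ≤ n then w (degsumFF t) else 0)
      = ∑ k ∈ Finset.range (n + 1), bFF F k * w k := by
  simp only [mul_ite, mul_zero]
  rw [← Finset.sum_filter]
  rw [← Finset.sum_fiberwise_of_maps_to (g := degsumFF)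
    (t := Finset.range (n + 1)) (fun t ht => Finset.mem_range.mpr
      (by have := (Finset.mem_filter.mp ht).2; omega))]
  apply Finset.sum_congr rfl
  intro k hk
  have hkn : k ≤ n := by have := Finset.mem_range.mp hk; omega
  have hset : ((irrsFF F n).powerset.filter (fun t => degsumFF t ≤ n)).filter
      (fun t => degsumFF t = k) = (irrsFF F n).powerset.filter (fun t => degsumFF t = k) := by
    ext t
    simp only [Finset.mem_filter, Finset.mem_powerset]
    constructor
    · rintro ⟨⟨h1, _⟩, h3⟩; exact ⟨h1, h3⟩
    · rintro ⟨h1, h3⟩; exact ⟨⟨h1, by omega⟩, h3⟩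
  rw [hset]
  have hterm : ∀ t ∈ (irrsFF F n).powerset.filter (fun t => degsumFF t = k),
      (-1 : ℚ) ^ t.card * w (degsumFF t) = (-1 : ℚ) ^ t.card * w k := by
    intro t ht
    rw [(Finset.mem_filter.mp ht).2]
  rw [Finset.sum_congr rfl hterm, ← Finset.sum_mul, bFF_stab hkn]

lemma phi_expand {f : F[X]} (hf : f.Monic) :
    totientFF (Fintype.card F) f
      = ∑ t ∈ ((normalizedFactors f).toFinset).powerset,
          (-1 : ℚ) ^ t.card *
            ((Fintype.card F : ℚ) ^ f.natDegree / (Fintype.card F : ℚ) ^ (degsumFF t)) := by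
  set Q : ℚ := (Fintype.card F : ℚ) with hQ
  have hprod : ∏ m ∈ (normalizedFactors f).toFinset, (1 - 1 / Q ^ m.natDegree)
      = ∑ t ∈ ((normalizedFactors f).toFinset).powerset,
          (-1 : ℚ) ^ t.card * (1 / Q ^ (degsumFF t)) := by
    rw [Finset.prod_congr rfl (fun m _ =>
      show (1 - 1 / Q ^ m.natDegree : ℚ) = -(1 / Q ^ m.natDegree) + 1 by ring)]
    rw [Finset.prod_add]
    apply Finset.sum_congr rfl
    intro t _
    rw [Finset.prod_const_one, mul_one]
    have h2 : ∏ m ∈ t, (1 / Q ^ m.natDegree) = 1 / Q ^ (degsumFF t) := by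
      rw [degsumFF, ← Finset.prod_pow_eq_pow_sum]
      simp [one_div]
    calc ∏ m ∈ t, -(1 / Q ^ m.natDegree)
        = ∏ m ∈ t, ((-1 : ℚ) * (1 / Q ^ m.natDegree)) :=
          Finset.prod_congr rfl fun m _ => by ring
      _ = (-1 : ℚ) ^ t.card * ∏ m ∈ t, (1 / Q ^ m.natDegree) := by
          rw [Finset.prod_mul_distrib, Finset.prod_const]
      _ = (-1 : ℚ) ^ t.card * (1 / Q ^ (degsumFF t)) := by rw [h2]
  rw [totientFF, ← hQ, hprod, Finset.mul_sum]
  apply Finset.sum_congr rfl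
  intro t _
  ring

lemma sum_pow_neg_one_rat {α : Type*} [DecidableEq α] (x : Finset α) :
    ∑ t ∈ x.powerset, (-1 : ℚ) ^ t.card = if x = ∅ then 1 else 0 := by
  have h := Finset.sum_powerset_neg_one_pow_card (x := x)
  have h2 : ((∑ t ∈ x.powerset, (-1 : ℤ) ^ t.card : ℤ) : ℚ)
      = ∑ t ∈ x.powerset, (-1 : ℚ) ^ t.card := by push_cast; rfl
  rw [← h2, h]
  split_ifs <;> norm_num

lemma recFF (n : ℕ) :
    (if n = 0 then (1 : ℚ) else 0)
      = ∑ k ∈ Finset.range (n + 1), bFF F k * (Fintype.card F : ℚ) ^ (n - k) := by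
  have key := (swapFF (F := F) n (fun c _ => (-1 : ℚ) ^ c)).trans
    (groupFF n (fun k => (Fintype.card F : ℚ) ^ (n - k)))
  rw [← key]
  have h1 : ∀ f ∈ monicsFF F n,
      ∑ t ∈ ((normalizedFactors f).toFinset).powerset, (-1 : ℚ) ^ t.card
        = (if n = 0 then (1 : ℚ) else 0) := by
    intro f hf
    obtain ⟨hfm, hfd⟩ := mem_monicsFF.mp hf
    rw [sum_pow_neg_one_rat]
    by_cases hn : n = 0
    · subst hn
      have hf1 : f = 1 := hfm.natDegree_eq_zero.mp hfd
      rw [if_pos, if_pos rfl]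
      rw [hf1, normalizedFactors_one]
      simp
    · rw [if_neg, if_neg hn]
      intro hx
      have hx0 : normalizedFactors f = 0 := by
        exact Multiset.toFinset_eq_empty.mp hx
      have hassoc := prod_normalizedFactors hfm.ne_zero
      rw [hx0, Multiset.prod_zero] at hassoc
      have hu : IsUnit f := associated_one_iff_isUnit.mp hassoc.symm
      exact hn (hfd ▸ natDegree_eq_zero_of_isUnit hu)
  rw [Finset.sum_congr rfl h1, Finset.sum_const, card_monicsFF, nsmul_eq_mul]
  by_cases hn : n = 0 <;> simp [hn]

lemma bFF_zero : bFF F 0 = 1 := by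
  have h := recFF (F := F) 0
  simpa using h.symm

lemma bFF_one : bFF F 1 = -(Fintype.card F : ℚ) := by
  have h := recFF (F := F) 1
  simp [Finset.sum_range_succ, bFF_zero] at h
  linarith

lemma bFF_of_two_le {k : ℕ} (hk : 2 ≤ k) : bFF F k = 0 := by
  set Q : ℚ := (Fintype.card F : ℚ) with hQ
  have h1 := recFF (F := F) k
  have h2 := recFF (F := F) (k - 1)
  rw [if_neg (by omega)] at h1
  rw [if_neg (by omega)] at h2
  rw [Finset.sum_range_succ] at h1
  have hk1 : k - 1 + 1 = k := by omega
  rw [hk1] at h2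
  have h3 : ∑ j ∈ Finset.range k, bFF F j * Q ^ (k - j)
      = Q * ∑ j ∈ Finset.range k, bFF F j * Q ^ (k - 1 - j) := by
    rw [Finset.mul_sum]
    apply Finset.sum_congr rfl
    intro j hj
    have hj' : j < k := Finset.mem_range.mp hj
    have he : k - j = (k - 1 - j) + 1 := by omega
    rw [he, pow_succ]
    ring
  rw [h3, ← h2, mul_zero, zero_add, Nat.sub_self, pow_zero, mul_one] at h1
  exact h1.symm

lemma sum_phi_monicsFF (n : ℕ) (hn : 0 < n) :
    ∑ f ∈ monicsFF F n, totientFF (Fintype.card F) f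
      = (Fintype.card F : ℚ) ^ (2 * n) - (Fintype.card F : ℚ) ^ (2 * n - 1) := by
  set Q : ℚ := (Fintype.card F : ℚ) with hQ
  have hQ0 : Q ≠ 0 := by
    rw [hQ]
    simp [Fintype.card_ne_zero]
  have step1 : ∑ f ∈ monicsFF F n, totientFF (Fintype.card F) f
      = ∑ f ∈ monicsFF F n, ∑ t ∈ ((normalizedFactors f).toFinset).powerset,
          (-1 : ℚ) ^ t.card * (Q ^ n / Q ^ (degsumFF t)) := by
    apply Finset.sum_congr rfl
    intro f hf
    obtain ⟨hfm, hfd⟩ := mem_monicsFF.mp hf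
    rw [phi_expand hfm, hfd]
  have step2 := swapFF (F := F) n (fun c s => (-1 : ℚ) ^ c * (Q ^ n / Q ^ s))
  have step3 : ∑ t ∈ (irrsFF F n).powerset,
      ((-1 : ℚ) ^ t.card * (Q ^ n / Q ^ (degsumFF t))) *
        (if degsumFF t ≤ n then Q ^ (n - degsumFF t) else 0)
      = ∑ t ∈ (irrsFF F n).powerset,
          (-1 : ℚ) ^ t.card *
            (if degsumFF t ≤ n then (fun k => Q ^ (2 * (n - k))) (degsumFF t) else 0) := by
    apply Finset.sum_congr rfl
    intro t _
    by_cases h : degsumFF t ≤ n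
    · rw [if_pos h, if_pos h]
      have hpow : Q ^ n / Q ^ (degsumFF t) = Q ^ (n - degsumFF t) := by
        rw [pow_sub₀ Q hQ0 h, div_eq_mul_inv]
      rw [hpow, mul_assoc, ← pow_add]
      congr 2
      omega
    · rw [if_neg h, if_neg h, mul_zero, mul_zero]
  have key := (step1.trans step2).trans (step3.trans (groupFF n fun k => Q ^ (2 * (n - k))))
  rw [key]
  have hsub : ({0, 1} : Finset ℕ) ⊆ Finset.range (n + 1) := by
    intro x hx
    simp only [Finset.mem_insert, Finset.mem_singleton] at hx
    rcases hx with rfl | rfl <;> simp [Finset.mem_range] <;> omega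
  rw [← Finset.sum_subset hsub (fun k hk hknot => ?_)]
  · rw [Finset.sum_pair (by norm_num : (0 : ℕ) ≠ 1), bFF_zero, bFF_one]
    have h1 : 2 * (n - 0) = 2 * n := by omega
    have h2 : 2 * n - 1 = 2 * (n - 1) + 1 := by omega
    rw [h1, h2, pow_succ]
    ring
  · have hk2 : 2 ≤ k := by
      simp only [Finset.mem_insert, Finset.mem_singleton] at hknot
      omega
    rw [bFF_of_two_le hk2, zero_mul]

lemma sum_phi_monicsFF_zero :
    ∑ f ∈ monicsFF F 0, totientFF (Fintype.card F) f = 1 := by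
  have h1 : ∀ f ∈ monicsFF F 0, totientFF (Fintype.card F) f = 1 := by
    intro f hf
    obtain ⟨hfm, hfd⟩ := mem_monicsFF.mp hf
    have hf1 : f = 1 := hfm.natDegree_eq_zero.mp hfd
    subst hf1
    rw [totientFF, normalizedFactors_one]
    simp
  rw [Finset.sum_congr rfl h1, Finset.sum_const, card_monicsFF]
  simp

end AuxFF

/-- The summatory totient over monic polynomials of degree `< X` equals
`(q^(2X-1) + 1)/(q + 1)`. -/
theorem stmt2 (q : ℕ) (hq : ∃ p n : ℕ, p.Prime ∧ 0 < n ∧ q = p ^ n)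
    (F : Type) [Field F] [Fintype F] [DecidableEq F] (hF : Fintype.card F = q)
    (X : ℕ) (hX : 0 < X) :
    (∑ᶠ f ∈ {f : F[X] | f.Monic ∧ f.natDegree < X}, totientFF q f) =
      ((q : ℚ) ^ (2 * X - 1) + 1) / ((q : ℚ) + 1) := by
  classical
  subst hF
  set Q : ℚ := (Fintype.card F : ℚ) with hQ
  have hQpos : (0 : ℚ) < Q := by
    rw [hQ]
    exact_mod_cast Fintype.card_pos
  have hQ1 : Q + 1 ≠ 0 := by linarith
  have hset : {f : F[X] | f.Monic ∧ f.natDegree < X}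
      = ↑((Finset.range X).biUnion (monicsFF F)) := by
    ext f
    simp only [Set.mem_setOf_eq, Finset.coe_biUnion, Finset.coe_range, Set.mem_iUnion,
      Finset.mem_coe, Set.mem_Iio, mem_monicsFF]
    constructor
    · rintro ⟨hm, hd⟩
      exact ⟨f.natDegree, hd, hm, rfl⟩
    · rintro ⟨n, hn, hm, rfl⟩
      exact ⟨hm, hn⟩
  rw [hset, finsum_mem_coe_finset]
  have hdisj : Set.PairwiseDisjoint ↑(Finset.range X) (monicsFF F) := by
    intro a _ b _ hab
    apply Finset.disjoint_left.mpr
    intro f hfa hfb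
    exact hab ((mem_monicsFF.mp hfa).2 ▸ (mem_monicsFF.mp hfb).2.symm ▸ rfl)
  rw [Finset.sum_biUnion hdisj]
  have main : ∀ Y : ℕ, 0 < Y →
      ∑ n ∈ Finset.range Y, (∑ f ∈ monicsFF F n, totientFF (Fintype.card F) f)
        = (Q ^ (2 * Y - 1) + 1) / (Q + 1) := by
    intro Y hY
    induction Y with
    | zero => omega
    | succ m ih =>
      rcases Nat.eq_zero_or_pos m with rfl | hm
      · rw [Finset.sum_range_one, sum_phi_monicsFF_zero]
        norm_num
        rw [div_self hQ1]
      · rw [Finset.sum_range_succ, ih hm, sum_phi_monicsFF m hm]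
        obtain ⟨j, rfl⟩ : ∃ j, m = j + 1 := ⟨m - 1, by omega⟩
        have e1 : 2 * (j + 1) - 1 = 2 * j + 1 := by omega
        have e2 : 2 * (j + 1) = 2 * j + 2 := by omega
        have e3 : 2 * (j + 1 + 1) - 1 = 2 * j + 3 := by omega
        rw [e1, e2, e3]
        field_simp
        ring
  exact main X hX
end
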